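/- Let Φ = (φₙ) be a sequence of real-analytic functions on [−1,1] satisfying φₙ' = −b_{n−1}φ_{n−1} + i cₙ φₙ + bₙ φ_{n+1} with all bₙ ≠ 0 and φₙ(±1) = 0 for all n. Then every φₙ is identically zero. -/

import Mathlib

open Set

lemma iteratedDerivWithin_eq_iteratedDeriv_of_isOpen {F : ℝ → ℂ} {V : Set ℝ} {x : ℝ}
    (hV : IsOpen V) (hx : x ∈ V) (r : ℕ) :
    iteratedDerivWithin r F V x = iteratedDeriv r F x := by
  simp [iteratedDerivWithin, iteratedDeriv, iteratedFDerivWithin_of_isOpen r hV hx]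

lemma iteratedDeriv_comb (f g h : ℝ → ℂ) (a b c : ℂ) (x : ℝ) (r : ℕ)
    (hf : AnalyticAt ℝ f x) (hg : AnalyticAt ℝ g x) (hh : AnalyticAt ℝ h x) :
    iteratedDeriv r (fun y => a * f y + b * g y + c * h y) x
      = a * iteratedDeriv r f x + b * iteratedDeriv r g x + c * iteratedDeriv r h x := by
  obtain ⟨s, hsmem, hs⟩ := hf.exists_mem_nhds_analyticOnNhd
  obtain ⟨t, htmem, ht⟩ := hg.exists_mem_nhds_analyticOnNhd
  obtain ⟨u, humem, hu⟩ := hh.exists_mem_nhds_analyticOnNhd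
  set V := interior (s ∩ t ∩ u) with hVdef
  have hVopen : IsOpen V := isOpen_interior
  have hxV : x ∈ V := by
    rw [hVdef, mem_interior_iff_mem_nhds]
    exact Filter.inter_mem (Filter.inter_mem hsmem htmem) humem
  have hfa : ContDiffOn ℝ r f V := fun y hy =>
    ((hs y (interior_subset hy).1.1).contDiffAt.contDiffWithinAt)
  have hga : ContDiffOn ℝ r g V := fun y hy =>
    ((ht y (interior_subset hy).1.2).contDiffAt.contDiffWithinAt)
  have hha : ContDiffOn ℝ r h V := fun y hy =>
    ((hu y (interior_subset hy).2).contDiffAt.contDiffWithinAt)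
  have hud : UniqueDiffOn ℝ V := hVopen.uniqueDiffOn
  have e1 : (fun y => a * f y + b * g y + c * h y) = (a • f + b • g + c • h) := by
    funext y; simp [smul_eq_mul]
  have hsum : ContDiffOn ℝ (r : ℕ∞) (a • f + b • g) V :=
    (hfa.const_smul a).add (hga.const_smul b)
  have hch : ContDiffOn ℝ (r : ℕ∞) (c • h) V := hha.const_smul c
  have e2 : iteratedDerivWithin r (a • f + b • g + c • h) V x =
      iteratedDerivWithin r (a • f + b • g) V x + iteratedDerivWithin r (c • h) V x :=
    iteratedDerivWithin_add hxV hud (hsum x hxV) (hch x hxV)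
  have e3 : iteratedDerivWithin r (a • f + b • g) V x =
      iteratedDerivWithin r (a • f) V x + iteratedDerivWithin r (b • g) V x :=
    iteratedDerivWithin_add hxV hud (hfa.const_smul a x hxV) (hga.const_smul b x hxV)
  have e4 := iteratedDerivWithin_const_smul hxV hud a (hfa x hxV)
  have e5 := iteratedDerivWithin_const_smul hxV hud b (hga x hxV)
  have e6 := iteratedDerivWithin_const_smul hxV hud c (hha x hxV)
  rw [e1, ← iteratedDerivWithin_eq_iteratedDeriv_of_isOpen (F := a • f + b • g + c • h) hVopen hxV,
    ← iteratedDerivWithin_eq_iteratedDeriv_of_isOpen (F := f) hVopen hxV,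
    ← iteratedDerivWithin_eq_iteratedDeriv_of_isOpen (F := g) hVopen hxV,
    ← iteratedDerivWithin_eq_iteratedDeriv_of_isOpen (F := h) hVopen hxV,
    e2, e3, e4, e5, e6]
  simp [smul_eq_mul]

lemma eventually_zero_of_iteratedDeriv (f : ℝ → ℂ) (x : ℝ) (hf : AnalyticAt ℝ f x)
    (h : ∀ r, iteratedDeriv r f x = 0) : f =ᶠ[nhds x] 0 := by
  obtain ⟨p, hp⟩ := hf
  have key : ∀ n, p n = 0 := by
    intro n
    have h1 : (Nat.factorial n) • (p n fun _ => (1 : ℝ)) = 0 := by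
      obtain ⟨r, hr⟩ := hp
      rw [hr.factorial_smul 1 n, ← iteratedDeriv_eq_iteratedFDeriv, h n]
    have h2 : (p n fun _ => (1 : ℝ)) = 0 := by
      have hne : Nat.factorial n ≠ 0 := Nat.factorial_ne_zero n
      simpa [hne] using h1
    refine ContinuousMultilinearMap.ext fun v => ?_
    have hms := (p n).map_smul_univ v (fun _ => (1 : ℝ))
    simp only [smul_eq_mul, mul_one] at hms
    simp [hms, h2]
  have hp0 : p = 0 := funext key
  rw [hp0] at hp
  exact hp.eventually_eq_zero

/-- A T-system of real-analytic functions on `[-1,1]` satisfying zero Dirichlet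
boundary conditions must vanish identically. -/
theorem tsystem_dirichlet_trivial (φ : ℕ → ℝ → ℂ) (b : ℕ → ℂ) (c : ℕ → ℝ)
    (hb : ∀ n, b n ≠ 0)
    (han : ∀ n, AnalyticOnNhd ℝ (φ n) (Set.Icc (-1 : ℝ) 1))
    (hrec0 : ∀ x ∈ Set.Icc (-1 : ℝ) 1, deriv (φ 0) x =
      Complex.I * c 0 * φ 0 x + b 0 * φ 1 x)
    (hrec : ∀ (n : ℕ), ∀ x ∈ Set.Icc (-1 : ℝ) 1, deriv (φ (n + 1)) x =
      -b n * φ n x + Complex.I * c (n + 1) * φ (n + 1) x + b (n + 1) * φ (n + 2) x)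
    (hbc : ∀ n, φ n (-1) = 0 ∧ φ n 1 = 0) :
    ∀ n, ∀ x ∈ Set.Icc (-1 : ℝ) 1, φ n x = 0 := by
  have hmem1 : (1 : ℝ) ∈ Set.Icc (-1 : ℝ) 1 := by norm_num
  set a : ℕ → ℂ := fun n => if n = 0 then 0 else -b (n - 1) with ha
  have hrec' : ∀ n, ∀ x ∈ Set.Icc (-1 : ℝ) 1, deriv (φ n) x =
      a n * φ (n - 1) x + (Complex.I * c n) * φ n x + b n * φ (n + 1) x := by
    intro n x hx
    cases n with
    | zero => simpa [ha] using hrec0 x hx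
    | succ m => simpa [ha] using hrec m x hx
  have hIoo : Set.Ioo (-1 : ℝ) 1 ∈ nhdsWithin (1 : ℝ) (Set.Iio 1) :=
    Ioo_mem_nhdsLT_of_mem (by norm_num)
  have hevd : ∀ n, deriv (φ n) =ᶠ[nhds (1 : ℝ)]
      fun x => a n * φ (n - 1) x + (Complex.I * c n) * φ n x + b n * φ (n + 1) x := by
    intro n
    have hL : AnalyticAt ℝ (deriv (φ n)) 1 := (han n).deriv 1 hmem1
    have hR : AnalyticAt ℝ
        (fun x => a n * φ (n - 1) x + (Complex.I * c n) * φ n x + b n * φ (n + 1) x) 1 :=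
      ((analyticAt_const.mul (han (n - 1) 1 hmem1)).add
        (analyticAt_const.mul (han n 1 hmem1))).add
        (analyticAt_const.mul (han (n + 1) 1 hmem1))
    have hfreq : ∀ᶠ x in nhdsWithin (1 : ℝ) (Set.Iio 1),
        deriv (φ n) x =
          a n * φ (n - 1) x + (Complex.I * c n) * φ n x + b n * φ (n + 1) x :=
      Filter.eventually_of_mem hIoo (fun x hx => hrec' n x (Set.Ioo_subset_Icc_self hx))
    exact (AnalyticAt.frequently_eq_iff_eventually_eq hL hR).mp
      (hfreq.frequently.filter_mono (nhdsWithin_mono 1 (fun y hy => ne_of_lt hy)))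
  have hzero : ∀ r n, iteratedDeriv r (φ n) 1 = 0 := by
    intro r
    induction r with
    | zero => intro n; simpa using (hbc n).2
    | succ r ih =>
      intro n
      rw [iteratedDeriv_succ', (hevd n).iteratedDeriv_eq r,
        iteratedDeriv_comb _ _ _ _ _ _ 1 r (han (n - 1) 1 hmem1) (han n 1 hmem1)
          (han (n + 1) 1 hmem1),
        ih (n - 1), ih n, ih (n + 1)]
      ring
  intro n x hx
  have hev0 : φ n =ᶠ[nhds (1 : ℝ)] 0 :=
    eventually_zero_of_iteratedDeriv (φ n) 1 (han n 1 hmem1) (fun r => hzero r n)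
  exact (han n).eqOn_zero_of_preconnected_of_eventuallyEq_zero isPreconnected_Icc hmem1 hev0 hx
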